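/- Let n ≥ 1, let a₁, …, aₙ > 0, let E = {x ∈ ℝⁿ : Σᵢ xᵢ²/aᵢ² ≤ 1}, and let ρ ≥ 0. Then the volume of the ρ-neighborhood E_ρ = {x ∈ ℝⁿ : dist(x, E) ≤ ρ} satisfies vol(E_ρ) ≥ (2/√n)ⁿ · ∏ᵢ (aᵢ + ρ). -/

import Mathlib

open MeasureTheory

/-- Lower bound for the volume of the closed `ρ`-neighborhood of an ellipsoid:
`vol(E_ρ) ≥ (2/√n)^n ∏ i, (a i + ρ)`. -/
theorem ellipsoid_neighborhood_volume_lower (n : ℕ) (hn : 1 ≤ n)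
    (a : Fin n → ℝ) (ha : ∀ i, 0 < a i) (ρ : ℝ) (hρ : 0 ≤ ρ) :
    ENNReal.ofReal ((2 / Real.sqrt n) ^ n * ∏ i, (a i + ρ))
      ≤ volume {x : EuclideanSpace ℝ (Fin n) |
          Metric.infDist x {y : EuclideanSpace ℝ (Fin n) | ∑ i, (y i) ^ 2 / (a i) ^ 2 ≤ 1} ≤ ρ} := by
  have hn0 : (0:ℝ) < n := by exact_mod_cast Nat.pos_of_ne_zero (by omega)
  have hnne : (n:ℝ) ≠ 0 := hn0.ne'
  have hs : 0 < Real.sqrt n := Real.sqrt_pos.2 hn0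
  have hsne : Real.sqrt n ≠ 0 := hs.ne'
  have hsq : (Real.sqrt n) ^ 2 = n := Real.sq_sqrt hn0.le
  set c : Fin n → ℝ := fun i => (a i + ρ) / Real.sqrt n with hc
  have haρ : ∀ i, 0 < a i + ρ := fun i => by linarith [ha i]
  have haρne : ∀ i, a i + ρ ≠ 0 := fun i => (haρ i).ne'
  have hcpos : ∀ i, 0 < c i := fun i => div_pos (haρ i) hs
  set E : Set (EuclideanSpace ℝ (Fin n)) :=
    {y : EuclideanSpace ℝ (Fin n) | ∑ i, (y i) ^ 2 / (a i) ^ 2 ≤ 1} with hE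
  set B : Set (EuclideanSpace ℝ (Fin n)) :=
    (MeasurableEquiv.toLp 2 (Fin n → ℝ)).symm ⁻¹'
      (Set.pi Set.univ fun i => Set.Icc (-(c i)) (c i)) with hB
  have hBsub : B ⊆ {x : EuclideanSpace ℝ (Fin n) | Metric.infDist x E ≤ ρ} := by
    intro x hx
    simp only [hB, Set.mem_preimage, Set.mem_pi, Set.mem_univ, forall_true_left,
      Set.mem_Icc] at hx
    set y : EuclideanSpace ℝ (Fin n) := WithLp.toLp 2 (fun i => a i * x i / (a i + ρ)) with hy
    have hxc : ∀ i, (x i) ^ 2 ≤ (c i) ^ 2 := fun i =>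
      sq_le_sq' (hx i).1 (hx i).2
    have hcsq : ∀ i, (c i) ^ 2 = (a i + ρ) ^ 2 / n := by
      intro i
      rw [hc]
      rw [div_pow, hsq]
    have hyE : y ∈ E := by
      simp only [hE, Set.mem_setOf_eq]
      have hbound : ∀ i, (y i) ^ 2 / (a i) ^ 2 ≤ 1 / n := by
        intro i
        have h1 : (y i) ^ 2 / (a i) ^ 2 = (x i) ^ 2 / (a i + ρ) ^ 2 := by
          rw [hy]
          field_simp [(ha i).ne', haρne i]
        rw [h1]
        have h2 : (x i) ^ 2 / (a i + ρ) ^ 2 ≤ ((a i + ρ) ^ 2 / n) / (a i + ρ) ^ 2 := by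
          apply div_le_div_of_nonneg_right _ (pow_pos (haρ i) 2).le
          · rw [← hcsq i]; exact hxc i
        refine h2.trans_eq ?_
        rw [div_right_comm, div_self (pow_ne_zero 2 (haρne i))]
      calc ∑ i, (y i) ^ 2 / (a i) ^ 2 ≤ ∑ _i : Fin n, 1 / (n:ℝ) :=
            Finset.sum_le_sum fun i _ => hbound i
        _ = 1 := by
            rw [Finset.sum_const, Finset.card_univ, Fintype.card_fin, nsmul_eq_mul]
            field_simp
    have hdist : dist x y ≤ ρ := by
      rw [EuclideanSpace.dist_eq]
      simp_rw [Real.dist_eq, sq_abs]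
      have hsum : ∑ i, (x i - y i) ^ 2 ≤ ρ ^ 2 := by
        have hbound : ∀ i, (x i - y i) ^ 2 ≤ ρ ^ 2 / n := by
          intro i
          have h1 : x i - y i = x i * ρ / (a i + ρ) := by
            rw [hy]
            field_simp [haρne i]
            ring
          rw [h1]
          have h2 : (x i * ρ / (a i + ρ)) ^ 2 = (x i) ^ 2 * ρ ^ 2 / (a i + ρ) ^ 2 := by
            rw [div_pow, mul_pow]
          rw [h2]
          have h3 : (x i) ^ 2 * ρ ^ 2 ≤ ((a i + ρ) ^ 2 / n) * ρ ^ 2 :=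
            mul_le_mul_of_nonneg_right ((hxc i).trans_eq (hcsq i)) (sq_nonneg ρ)
          have h4 : (x i) ^ 2 * ρ ^ 2 / (a i + ρ) ^ 2
              ≤ ((a i + ρ) ^ 2 / n) * ρ ^ 2 / (a i + ρ) ^ 2 :=
            div_le_div_of_nonneg_right h3 (pow_pos (haρ i) 2).le
          refine h4.trans_eq ?_
          rw [div_mul_eq_mul_div, div_div, mul_comm ((n:ℝ)) ((a i + ρ)^2), ← div_div,
            mul_comm, mul_div_assoc, div_self (pow_ne_zero 2 (haρne i)), mul_one]
        calc ∑ i, (x i - y i) ^ 2 ≤ ∑ _i : Fin n, ρ ^ 2 / n :=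
              Finset.sum_le_sum fun i _ => hbound i
          _ = ρ ^ 2 := by
              rw [Finset.sum_const, Finset.card_univ, Fintype.card_fin, nsmul_eq_mul]
              field_simp
      calc Real.sqrt (∑ i, (x i - y i) ^ 2) ≤ Real.sqrt (ρ ^ 2) :=
            Real.sqrt_le_sqrt hsum
        _ = ρ := Real.sqrt_sq hρ
    exact le_trans (Metric.infDist_le_dist_of_mem hyE) hdist
  have hvolB : volume B = ENNReal.ofReal ((2 / Real.sqrt n) ^ n * ∏ i, (a i + ρ)) := by
    rw [hB, (EuclideanSpace.volume_preserving_symm_measurableEquiv_toLp (Fin n)).measure_preimage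
      ((MeasurableSet.univ_pi fun i => measurableSet_Icc).nullMeasurableSet)]
    rw [volume_pi_pi]
    have h1 : ∀ i, volume (Set.Icc (-(c i)) (c i)) = ENNReal.ofReal (2 * c i) := by
      intro i
      rw [Real.volume_Icc]
      congr 1
      ring
    simp_rw [h1]
    rw [← ENNReal.ofReal_prod_of_nonneg fun i _ => by linarith [hcpos i]]
    congr 1
    have h2 : ∀ i, 2 * c i = (2 / Real.sqrt n) * (a i + ρ) := by
      intro i
      rw [hc, div_mul_eq_mul_div, mul_div_assoc]
    simp_rw [h2]
    rw [Finset.prod_mul_distrib, Finset.prod_const, Finset.card_univ, Fintype.card_fin]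
  rw [← hvolB]
  exact measure_mono hBsub
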